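/- For the symmetrized shuffling operator ν_k on S_n, the sum of the entries in each row of its matrix equals C(n,k)² · k!, i.e. Σ_{τ ∈ S_n} noninv_{n−k}(σ⁻¹τ) = C(n,k)²·k! for every σ ∈ S_n. -/

import Mathlib

/-- `noninv n k σ` is the number of increasing subsequences of length `k` of `σ ∈ S_n`. -/
def noninv (n k : ℕ) (σ : Equiv.Perm (Fin n)) : ℕ :=
  ((Finset.univ : Finset (Fin n)).powerset.filter
    (fun s => s.card = k ∧ ∀ i ∈ s, ∀ j ∈ s, i < j → σ⁻¹ i < σ⁻¹ j)).card

open Finset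

/-- The number of permutations of `Fin n` that are increasing on a given set `s`
is `n!/(s.card)!`, i.e. `n.descFactorial (n - s.card)`. -/
lemma card_incr_on {n : ℕ} (s : Finset (Fin n)) :
    (Finset.univ.filter (fun ρ : Equiv.Perm (Fin n) =>
      ∀ i ∈ s, ∀ j ∈ s, i < j → ρ i < ρ j)).card = n.descFactorial (n - s.card) := by
  classical
  have hmn : s.card ≤ n := by
    simpa using s.card_le_univ
  rw [← Fintype.card_subtype]
  have hF : Function.Bijective
      (fun ρ : {ρ : Equiv.Perm (Fin n) // ∀ i ∈ s, ∀ j ∈ s, i < j → ρ i < ρ j} =>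
        (⟨fun x : {x // x ∈ sᶜ} => ρ.1 x.1,
          fun a b hab => Subtype.ext (ρ.1.injective hab)⟩ : {x // x ∈ sᶜ} ↪ Fin n)) := by
    constructor
    · rintro ⟨ρ₁, hρ₁⟩ ⟨ρ₂, hρ₂⟩ h
      have hag : ∀ x (hx : x ∈ sᶜ), ρ₁ x = ρ₂ x := by
        intro x hx
        have := congrArg (fun e : {x // x ∈ sᶜ} ↪ Fin n => e ⟨x, hx⟩) h
        exact this
      set t : Finset (Fin n) := sᶜ.image ρ₁ with ht
      have htcard : t.card = n - s.card := by
        rw [ht, card_image_of_injective _ ρ₁.injective, card_compl, Fintype.card_fin]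
      have htc : tᶜ.card = s.card := by
        rw [card_compl, Fintype.card_fin, htcard, Nat.sub_sub_self hmn]
      have ht2 : t = sᶜ.image ρ₂ := by
        rw [ht]; exact image_congr (fun x hx => hag x hx)
      have claim : ∀ (ρ : Equiv.Perm (Fin n)), t = sᶜ.image ρ →
          ∀ x ∈ s, ρ x ∈ tᶜ := by
        intro ρ hρ x hx
        rw [mem_compl, hρ, mem_image]
        rintro ⟨y, hy, hxy⟩
        have : y = x := ρ.injective hxy
        rw [this, mem_compl] at hy
        exact hy hx
      have key : ∀ (ρ : Equiv.Perm (Fin n)), t = sᶜ.image ρ →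
          (∀ i ∈ s, ∀ j ∈ s, i < j → ρ i < ρ j) →
          (fun i : Fin s.card => ρ (s.orderEmbOfFin rfl i)) = tᶜ.orderEmbOfFin htc := by
        intro ρ hρ hinc
        apply orderEmbOfFin_unique
        · intro i
          exact claim ρ hρ _ (orderEmbOfFin_mem s rfl i)
        · intro i j hij
          exact hinc _ (orderEmbOfFin_mem s rfl i) _ (orderEmbOfFin_mem s rfl j)
            ((s.orderEmbOfFin rfl).strictMono hij)
      have k1 := key ρ₁ ht hρ₁
      have k2 := key ρ₂ ht2 hρ₂
      apply Subtype.ext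
      apply Equiv.ext
      intro x
      by_cases hx : x ∈ s
      · obtain ⟨i, hi⟩ : ∃ i, s.orderEmbOfFin rfl i = x := by
          have := (s.range_orderEmbOfFin rfl)
          rw [Set.ext_iff] at this
          exact (this x).mpr hx
        calc ρ₁ x = ρ₁ (s.orderEmbOfFin rfl i) := by rw [hi]
          _ = tᶜ.orderEmbOfFin htc i := congrFun k1 i
          _ = ρ₂ (s.orderEmbOfFin rfl i) := (congrFun k2 i).symm
          _ = ρ₂ x := by rw [hi]
      · exact hag x (mem_compl.mpr hx)
    · intro f
      set t : Finset (Fin n) := Finset.univ.map f with ht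
      have htcard : t.card = n - s.card := by
        rw [ht, card_map, card_univ, Fintype.card_coe, card_compl, Fintype.card_fin]
      have htc : tᶜ.card = s.card := by
        rw [card_compl, Fintype.card_fin, htcard, Nat.sub_sub_self hmn]
      set g : Fin n → Fin n := fun x =>
        if h : x ∈ s then tᶜ.orderEmbOfFin htc ((s.orderIsoOfFin rfl).symm ⟨x, h⟩)
        else f ⟨x, mem_compl.mpr h⟩ with hg
      have hgs : ∀ x (hx : x ∈ s),
          g x = tᶜ.orderEmbOfFin htc ((s.orderIsoOfFin rfl).symm ⟨x, hx⟩) := fun x hx =>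
        dif_pos hx
      have hgns : ∀ x (hx : x ∉ s), g x = f ⟨x, mem_compl.mpr hx⟩ := fun x hx => dif_neg hx
      have hmemc : ∀ x (hx : x ∈ s), g x ∈ tᶜ := by
        intro x hx; rw [hgs x hx]; exact orderEmbOfFin_mem _ _ _
      have hmemt : ∀ x (hx : x ∉ s), g x ∈ t := by
        intro x hx; rw [hgns x hx, ht, mem_map]
        exact ⟨⟨x, mem_compl.mpr hx⟩, mem_univ _, rfl⟩
      have hginj : Function.Injective g := by
        intro a b hab
        by_cases ha : a ∈ s <;> by_cases hb : b ∈ s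
        · rw [hgs a ha, hgs b hb] at hab
          have := (s.orderIsoOfFin rfl).symm.injective
            ((tᶜ.orderEmbOfFin htc).injective hab)
          exact congrArg Subtype.val (this)
        · exact absurd (hab ▸ hmemc a ha) (by simpa using hmemt b hb)
        · exact absurd (hab ▸ hmemt a ha) (by simpa using hmemc b hb)
        · rw [hgns a ha, hgns b hb] at hab
          exact congrArg Subtype.val (f.injective hab)
      set ρ : Equiv.Perm (Fin n) :=
        Equiv.ofBijective g (Finite.injective_iff_bijective.mp hginj) with hρ
      have hρapp : ∀ x, ρ x = g x := fun x => rfl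
      have hρinc : ∀ i ∈ s, ∀ j ∈ s, i < j → ρ i < ρ j := by
        intro i hi j hj hij
        rw [hρapp, hρapp, hgs i hi, hgs j hj]
        apply (tᶜ.orderEmbOfFin htc).strictMono
        exact (s.orderIsoOfFin rfl).symm.strictMono (Subtype.mk_lt_mk.mpr hij)
      refine ⟨⟨ρ, hρinc⟩, ?_⟩
      apply Function.Embedding.ext
      intro x
      show ρ x.1 = f x
      rw [hρapp, hgns x.1 (mem_compl.mp x.2)]
  rw [Fintype.card_of_bijective hF, Fintype.card_embedding_eq, Fintype.card_fin,
    Fintype.card_coe, card_compl, Fintype.card_fin]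

/-- The sum of the entries in each row of the matrix of the symmetrized shuffling
operator `ν_k` on `S_n` equals `C(n,k)² · k!`:
`Σ_{τ ∈ S_n} noninv_{n−k}(σ⁻¹τ) = C(n,k)²·k!` for every `σ ∈ S_n`. -/
theorem nu_row_sum (n k : ℕ) (hk : k ≤ n) (σ : Equiv.Perm (Fin n)) :
    ∑ τ : Equiv.Perm (Fin n), noninv n (n - k) (σ⁻¹ * τ)
      = (n.choose k) ^ 2 * k.factorial := by
  classical
  have hre : (∑ τ : Equiv.Perm (Fin n), noninv n (n - k) (σ⁻¹ * τ))
      = ∑ π : Equiv.Perm (Fin n), noninv n (n - k) π :=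
    (Fintype.sum_equiv (Equiv.mulLeft σ) _ _ (fun π => by
      simp [inv_mul_cancel_left])).symm
  rw [hre]
  unfold noninv
  simp only [Finset.card_filter]
  rw [Finset.sum_comm]
  have hinner : ∀ s ∈ (Finset.univ : Finset (Fin n)).powerset,
      (∑ π : Equiv.Perm (Fin n),
        if s.card = n - k ∧ ∀ i ∈ s, ∀ j ∈ s, i < j → π⁻¹ i < π⁻¹ j then 1 else 0)
      = if s.card = n - k then n.descFactorial k else 0 := by
    intro s _
    by_cases hc : s.card = n - k
    · simp only [hc, true_and, if_true]
      have hb : (Finset.univ.filter (fun π : Equiv.Perm (Fin n) =>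
            ∀ i ∈ s, ∀ j ∈ s, i < j → π⁻¹ i < π⁻¹ j)).card
          = (Finset.univ.filter (fun ρ : Equiv.Perm (Fin n) =>
            ∀ i ∈ s, ∀ j ∈ s, i < j → ρ i < ρ j)).card := by
        apply Finset.card_bij' (fun π _ => π⁻¹) (fun ρ _ => ρ⁻¹)
        · intro π _; simp
        · intro ρ _; simp
        · intro π hπ
          simp only [mem_filter, mem_univ, true_and] at hπ ⊢
          exact hπ
        · intro ρ hρ
          simp only [mem_filter, mem_univ, true_and] at hρ ⊢
          simpa using hρ
      rw [← Finset.card_filter, hb, card_incr_on, hc, Nat.sub_sub_self hk]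
    · simp [hc]
  rw [Finset.sum_congr rfl hinner, ← Finset.sum_filter,
    ← Finset.powersetCard_eq_filter, Finset.sum_const, Finset.card_powersetCard,
    card_univ, Fintype.card_fin, smul_eq_mul, Nat.choose_symm hk,
    Nat.descFactorial_eq_factorial_mul_choose]
  ring
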